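/- Let x_1, …, x_m ∈ ℝ^n \ {0}, a_1, …, a_m ∈ ℝ, and let K = { y ∈ ℝ^n | x_i · y + a_i ≤ 0 for all i }. If K is nonempty, then for every z ∈ ℝ^n, letting w be the unique nearest point of K to z, one has z ∈ {w} + Cone{ x_i | x_i · w + a_i = 0 }. -/

import Mathlib

open Finset


lemma closed_cone_of_li {E : Type*} [NormedAddCommGroup E] [NormedSpace ℝ E]
    [FiniteDimensional ℝ E] {m : ℕ} (y : Fin m → E) (s : Finset (Fin m))
    (hli : LinearIndependent ℝ (fun i : s => y i)) :
    IsClosed {v : E | ∃ t : Fin m → ℝ, (∀ i, 0 ≤ t i) ∧ v = ∑ i ∈ s, t i • y i} := by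
  let T : ({i // i ∈ s} → ℝ) →ₗ[ℝ] E :=
    { toFun := fun u => ∑ i : {i // i ∈ s}, u i • y i
      map_add' := fun u v => by simp [add_smul, Finset.sum_add_distrib]
      map_smul' := fun c u => by simp [Finset.smul_sum, smul_smul]  }
  have hker : LinearMap.ker T = ⊥ := by
    rw [LinearMap.ker_eq_bot']
    intro u hu
    have := Fintype.linearIndependent_iff.mp hli u hu
    funext i; exact this i
  have hembed := LinearMap.isClosedEmbedding_of_injective hker
  have horth : IsClosed {u : {i // i ∈ s} → ℝ | ∀ i, 0 ≤ u i} := by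
    have : {u : {i // i ∈ s} → ℝ | ∀ i, 0 ≤ u i} = ⋂ i, {u | 0 ≤ u i} := by
      ext u; simp
    rw [this]
    exact isClosed_iInter fun i => isClosed_le continuous_const (continuous_apply i)
  have himg : {v : E | ∃ t : Fin m → ℝ, (∀ i, 0 ≤ t i) ∧ v = ∑ i ∈ s, t i • y i}
      = T '' {u | ∀ i, 0 ≤ u i} := by
    ext v
    constructor
    · rintro ⟨t, ht, rfl⟩
      refine ⟨fun i => t i, fun i => ht i, ?_⟩
      show ∑ i : {i // i ∈ s}, t i • y i = _
      rw [Finset.sum_coe_sort s (fun i => t i • y i)]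
    · rintro ⟨u, hu, rfl⟩
      refine ⟨fun i => if h : i ∈ s then u ⟨i, h⟩ else 0, ?_, ?_⟩
      · intro i; dsimp; split
        · exact hu _
        · exact le_refl 0
      · show _ = ∑ i ∈ s, _
        rw [← Finset.sum_coe_sort s (fun i => (if h : i ∈ s then u ⟨i, h⟩ else 0) • y i)]
        exact Finset.sum_congr rfl fun i _ => by rw [dif_pos i.2]
  rw [himg]
  exact hembed.isClosedMap _ horth
open Finset

lemma cone_caratheodory {E : Type*} [AddCommGroup E] [Module ℝ E] {m : ℕ} (y : Fin m → E) :
    ∀ (s : Finset (Fin m)) (v : E),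
      (∃ t : Fin m → ℝ, (∀ i, 0 ≤ t i) ∧ v = ∑ i ∈ s, t i • y i) →
      ∃ s' : Finset (Fin m), s' ⊆ s ∧ LinearIndependent ℝ (fun i : s' => y i) ∧
        ∃ t : Fin m → ℝ, (∀ i, 0 ≤ t i) ∧ v = ∑ i ∈ s', t i • y i := by
  intro s
  induction s using Finset.strongInductionOn with
  | _ s ih =>
    rintro v ⟨t, ht, hv⟩
    by_cases hli : LinearIndependent ℝ (fun i : s => y i)
    · exact ⟨s, subset_rfl, hli, t, ht, hv⟩
    obtain ⟨g, hg0, i₁, hgi₁⟩ := Fintype.not_linearIndependent_iff.mp hli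
    obtain ⟨c, hc0, i₁', hcpos⟩ : ∃ c : {i // i ∈ s} → ℝ,
        (∑ i, c i • y i = 0) ∧ ∃ i, 0 < c i := by
      rcases hgi₁.lt_or_gt with h | h
      · exact ⟨-g, by simpa using hg0, i₁, by simpa using h⟩
      · exact ⟨g, hg0, i₁, h⟩
    set ce : Fin m → ℝ := fun i => if h : i ∈ s then c ⟨i, h⟩ else 0 with hce
    have hcesum : ∑ i ∈ s, ce i • y i = 0 := by
      rw [← Finset.sum_coe_sort s (fun i => ce i • y i), ← hc0]
      exact Finset.sum_congr rfl fun i _ => by simp [hce, dif_pos i.2]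
    have hne : (s.filter (fun i => 0 < ce i)).Nonempty := by
      refine ⟨i₁', Finset.mem_filter.mpr ⟨i₁'.2, ?_⟩⟩
      simpa [hce, dif_pos i₁'.2] using hcpos
    obtain ⟨i₀, hi₀mem, hi₀min⟩ := Finset.exists_min_image _ (fun i => t i / ce i) hne
    have hi₀s : i₀ ∈ s := (Finset.mem_filter.mp hi₀mem).1
    have hcei₀ : 0 < ce i₀ := (Finset.mem_filter.mp hi₀mem).2
    set r := t i₀ / ce i₀ with hr
    have hr0 : 0 ≤ r := div_nonneg (ht i₀) hcei₀.le
    set t' : Fin m → ℝ := fun i => if i ∈ s.erase i₀ then t i - r * ce i else 0 with ht'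
    have ht'0 : ∀ i, 0 ≤ t' i := by
      intro i
      simp only [ht']
      split
      case isTrue h =>
        have his : i ∈ s := Finset.mem_of_mem_erase h
        rcases lt_or_ge 0 (ce i) with hpos | hneg
        · have hmin := hi₀min i (Finset.mem_filter.mpr ⟨his, hpos⟩)
          rw [le_div_iff₀ hpos] at hmin
          linarith
        · nlinarith [ht i]
      case isFalse => exact le_refl 0
    have hsum : v = ∑ i ∈ s.erase i₀, t' i • y i := by
      have key : ∑ i ∈ s, (t i - r * ce i) • y i = v := by
        have : ∑ i ∈ s, (t i - r * ce i) • y i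
            = ∑ i ∈ s, t i • y i - r • ∑ i ∈ s, ce i • y i := by
          rw [Finset.smul_sum, ← Finset.sum_sub_distrib]
          exact Finset.sum_congr rfl fun i _ => by rw [sub_smul, smul_smul]
        rw [this, hcesum, smul_zero, sub_zero, hv]
      have hz : (t i₀ - r * ce i₀) • y i₀ = 0 := by
        rw [hr, div_mul_cancel₀ _ hcei₀.ne', sub_self, zero_smul]
      calc v = ∑ i ∈ s, (t i - r * ce i) • y i := key.symm
        _ = (t i₀ - r * ce i₀) • y i₀ + ∑ i ∈ s.erase i₀, (t i - r * ce i) • y i :=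
            (Finset.add_sum_erase s _ hi₀s).symm
        _ = ∑ i ∈ s.erase i₀, (t i - r * ce i) • y i := by rw [hz, zero_add]
        _ = ∑ i ∈ s.erase i₀, t' i • y i :=
            Finset.sum_congr rfl fun i hi => by rw [ht']; simp only [if_pos hi]
    obtain ⟨s', hs', hli', rest⟩ :=
      ih (s.erase i₀) (Finset.erase_ssubset hi₀s) v ⟨t', ht'0, hsum⟩
    exact ⟨s', hs'.trans (Finset.erase_subset _ _), hli', rest⟩


open RealInnerProductSpace Pointwise

/-- Let `K = {y | ∀ i, ⟪x i, y⟫ + a i ≤ 0}` be a nonempty polyhedral set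
with nonzero `x i`.  For `z ∈ ℝ^n`, if `w` is the nearest point of `K` to `z`, then
`z ∈ {w} + Cone{x i | ⟪x i, w⟫ + a i = 0}`. -/
theorem stmt3 (n m : ℕ) (x : Fin m → EuclideanSpace ℝ (Fin n))
    (hx : ∀ i, x i ≠ 0) (a : Fin m → ℝ)
    (K : Set (EuclideanSpace ℝ (Fin n)))
    (hK : K = {y | ∀ i, ⟪x i, y⟫ + a i ≤ 0})
    (hne : K.Nonempty)
    (z w : EuclideanSpace ℝ (Fin n)) (hw : w ∈ K)
    (hnear : ∀ w' ∈ K, dist z w ≤ dist z w') :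
    ∃ t : Fin m → ℝ, (∀ i, 0 ≤ t i) ∧ (∀ i, ⟪x i, w⟫ + a i ≠ 0 → t i = 0) ∧
      z = w + ∑ i, t i • x i := by
  classical
  -- K is convex
  have hconv : Convex ℝ K := by
    rw [hK]
    intro u hu v hv α β hα hβ hαβ i
    have h1 : ⟪x i, α • u + β • v⟫ = α * ⟪x i, u⟫ + β * ⟪x i, v⟫ := by
      rw [inner_add_right, real_inner_smul_right, real_inner_smul_right]
    rw [h1]
    have h3 : (α + β) * a i = a i := by rw [hαβ, one_mul]
    nlinarith [mul_nonneg hα (neg_nonneg.mpr (hu i)), mul_nonneg hβ (neg_nonneg.mpr (hv i)), h3]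
  -- variational inequality
  have hfeas : ∀ y ∈ K, ⟪z - w, y - w⟫ ≤ 0 := by
    have hiInf : ‖z - w‖ = ⨅ y : K, ‖z - y‖ := by
      haveI : Nonempty K := ⟨⟨w, hw⟩⟩
      apply le_antisymm
      · exact le_ciInf fun y => by
          simpa [dist_eq_norm] using hnear y y.2
      · exact ciInf_le ⟨0, fun _ ⟨_, h⟩ => h ▸ norm_nonneg _⟩ (⟨w, hw⟩ : K)
    exact (norm_eq_iInf_iff_real_inner_le_zero hconv hw).1 hiInf
  -- active set
  set A : Finset (Fin m) := Finset.univ.filter (fun i => ⟪x i, w⟫ + a i = 0) with hA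
  -- feasible directions
  have key : ∀ d : EuclideanSpace ℝ (Fin n), (∀ i ∈ A, ⟪x i, d⟫ ≤ 0) → ⟪z - w, d⟫ ≤ 0 := by
    intro d hd
    set g : Fin m → ℝ := fun i =>
      if 0 < ⟪x i, d⟫ then -(⟪x i, w⟫ + a i) / ⟪x i, d⟫ else 1 with hg
    set ε : ℝ := (insert (1:ℝ) (Finset.univ.image g)).inf' (Finset.insert_nonempty _ _) id
      with hε
    have hεpos : 0 < ε := by
      rw [hε, Finset.lt_inf'_iff]
      rintro b hb
      rcases Finset.mem_insert.mp hb with rfl | hb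
      · exact one_pos
      · obtain ⟨i, _, rfl⟩ := Finset.mem_image.mp hb
        rw [hg]
        dsimp only
        split
        case isTrue hpos =>
          have hiA : i ∉ A := fun h => absurd (hd i h) (not_le.mpr hpos)
          have : ⟪x i, w⟫ + a i ≠ 0 := by
            intro h; exact hiA (Finset.mem_filter.mpr ⟨Finset.mem_univ _, h⟩)
          have hlt : ⟪x i, w⟫ + a i < 0 := lt_of_le_of_ne (by rw [hK] at hw; exact hw i) this
          exact div_pos (by linarith) hpos
        case isFalse => exact one_pos
    have hmem : w + ε • d ∈ K := by
      rw [hK]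
      intro i
      have h1 : ⟪x i, w + ε • d⟫ + a i = (⟪x i, w⟫ + a i) + ε * ⟪x i, d⟫ := by
        rw [inner_add_right, real_inner_smul_right]; ring
      rw [h1]
      have hci : ⟪x i, w⟫ + a i ≤ 0 := by rw [hK] at hw; exact hw i
      rcases le_or_gt ⟪x i, d⟫ 0 with hle | hpos
      · nlinarith
      · have hεle : ε ≤ g i := by
          rw [hε]
          exact Finset.inf'_le id (Finset.mem_insert_of_mem
            (Finset.mem_image_of_mem g (Finset.mem_univ i)))
        rw [hg] at hεle
        simp only [if_pos hpos] at hεle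
        rw [le_div_iff₀ hpos] at hεle
        nlinarith
    have := hfeas _ hmem
    rw [add_sub_cancel_left, real_inner_smul_right] at this
    nlinarith
  -- the cone of active constraint vectors
  set C : Set (EuclideanSpace ℝ (Fin n)) := {v | ∃ t : Fin m → ℝ, (∀ i, 0 ≤ t i) ∧ v = ∑ i ∈ A, t i • x i} with hC
  have h0C : (0 : EuclideanSpace ℝ (Fin n)) ∈ C := ⟨0, fun i => le_refl 0, by simp⟩
  have hCclosed : IsClosed C := by
    have hcup : C = ⋃ s ∈ {s : Finset (Fin m) | s ⊆ A ∧ LinearIndependent ℝ (fun i : s => x i)},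
        {v : EuclideanSpace ℝ (Fin n) | ∃ t : Fin m → ℝ, (∀ i, 0 ≤ t i) ∧ v = ∑ i ∈ s, t i • x i} := by
      ext v
      constructor
      · rintro hv
        obtain ⟨s', hs', hli', t, ht, hv'⟩ := cone_caratheodory x A v hv
        exact Set.mem_biUnion ⟨hs', hli'⟩ ⟨t, ht, hv'⟩
      · rintro hv
        obtain ⟨s, hs, hvs⟩ := Set.mem_iUnion₂.mp hv
        obtain ⟨t, ht, rfl⟩ := hvs
        refine ⟨fun i => if i ∈ s then t i else 0, fun i => by dsimp; split; exacts [ht i, le_refl 0], ?_⟩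
        rw [← Finset.sum_subset hs.1 (fun i _ his => by simp only [if_neg his, zero_smul])]
        exact Finset.sum_congr rfl fun i hi => by simp only [if_pos hi]
    rw [hcup]
    exact Set.Finite.isClosed_biUnion (Set.toFinite _)
      (fun s hs => closed_cone_of_li x s hs.2)
  -- C as a convex cone
  set Ccone : ConvexCone ℝ (EuclideanSpace ℝ (Fin n)) :=
    { carrier := C
      smul_mem' := by
        rintro c hc v ⟨t, ht, rfl⟩
        exact ⟨fun i => c * t i, fun i => mul_nonneg hc.le (ht i), by
          rw [Finset.smul_sum]; exact Finset.sum_congr rfl fun i _ => by dsimp only; rw [mul_smul]⟩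
      add_mem' := by
        rintro v ⟨t, ht, rfl⟩ v' ⟨t', ht', rfl⟩
        exact ⟨fun i => t i + t' i, fun i => add_nonneg (ht i) (ht' i), by
          rw [← Finset.sum_add_distrib]; exact Finset.sum_congr rfl fun i _ => by dsimp only; rw [add_smul]⟩ }
    with hCcone
  have hdd : ((ProperCone.innerDual ((ProperCone.innerDual C : ProperCone ℝ (EuclideanSpace ℝ (Fin n))) : Set (EuclideanSpace ℝ (Fin n))) : ProperCone ℝ (EuclideanSpace ℝ (Fin n))) : Set (EuclideanSpace ℝ (Fin n))) = C := by
    obtain ⟨P, hP⟩ := ConvexCone.canLift.prf Ccone ⟨⟨0, h0C⟩, hCclosed⟩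
    have hPC : (P : Set (EuclideanSpace ℝ (Fin n))) = C := by
      have := congrArg (fun K : ConvexCone ℝ (EuclideanSpace ℝ (Fin n)) => (K : Set (EuclideanSpace ℝ (Fin n)))) hP
      exact this
    rw [← hPC, ProperCone.innerDual_innerDual]
  -- z - w is in the double dual
  have hzw : z - w ∈ ((ProperCone.innerDual ((ProperCone.innerDual C : ProperCone ℝ (EuclideanSpace ℝ (Fin n))) : Set (EuclideanSpace ℝ (Fin n))) : ProperCone ℝ (EuclideanSpace ℝ (Fin n))) : Set (EuclideanSpace ℝ (Fin n))) := by
    rw [SetLike.mem_coe, ProperCone.mem_innerDual]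
    intro u hu
    rw [SetLike.mem_coe, ProperCone.mem_innerDual] at hu
    have hxu : ∀ i ∈ A, 0 ≤ ⟪x i, u⟫ := by
      intro i hi
      apply hu
      show x i ∈ C
      refine ⟨fun j => if j = i then 1 else 0, fun j => by dsimp; split; exacts [zero_le_one, le_refl 0], ?_⟩
      rw [Finset.sum_eq_single i (fun j _ hji => by simp [hji]) (fun h => absurd hi h)]
      simp
    have := key (-u) (fun i hi => by rw [inner_neg_right]; linarith [hxu i hi])
    rw [inner_neg_right] at this
    rw [real_inner_comm]
    linarith
  rw [hdd] at hzw
  obtain ⟨t, ht, htv⟩ : z - w ∈ C := hzw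
  refine ⟨fun i => if i ∈ A then t i else 0,
    fun i => by dsimp; split; exacts [ht i, le_refl 0], fun i hi => ?_, ?_⟩
  · have : i ∉ A := fun h => hi ((Finset.mem_filter.mp h).2)
    simp [this]
  · have hsum : ∑ i, (if i ∈ A then t i else 0) • x i = ∑ i ∈ A, t i • x i := by
      rw [← Finset.sum_subset (Finset.subset_univ A) (fun i _ hiA => by simp only [if_neg hiA, zero_smul])]
      exact Finset.sum_congr rfl fun i hi => by simp only [if_pos hi]
    dsimp only
    rw [hsum, ← htv]
    abel
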